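/- Let g(x) = a(x+1)^{l_1} + b x^{k_2}(x+1)^{l_2} + x^{k_3} with a, b nonzero reals, k_2, k_3 > 0, l_2 ≥ 0, l_1 > k_2 + l_2 and l_1 > k_3. If k_2 ≤ k_3 ≤ k_2 + l_2, then g has at most two roots (with multiplicity) in (-∞, -1) and at most two roots (with multiplicity) in (-1, 0). -/

import Mathlib

open Polynomial

/-- Number of sign changes in the coefficient sequence, disregarding zeros. -/
noncomputable def signVar (p : Polynomial ℝ) : ℕ :=
  let l := (((List.range (p.natDegree + 1)).map fun i => p.coeff i).filter fun a => a ≠ 0)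
  (l.zip l.tail).countP fun q => q.1 * q.2 < 0

/-- Substitution y = x + 1 into a bivariate polynomial. -/
noncomputable def subXX1 (f : MvPolynomial (Fin 2) ℝ) : Polynomial ℝ :=
  MvPolynomial.aeval ![Polynomial.X, Polynomial.X + 1] f

/-- `T3 d h = (x+1)^d * h(-x/(x+1))` as a polynomial. -/
noncomputable def T3 (d : ℕ) (h : Polynomial ℝ) : Polynomial ℝ :=
  ∑ i ∈ Finset.range (d + 1),
    Polynomial.C (h.coeff i) * (-Polynomial.X) ^ i * (Polynomial.X + 1) ^ (d - i)

noncomputable def VI1 (h : Polynomial ℝ) : ℕ := signVar h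
noncomputable def VI2 (h : Polynomial ℝ) : ℕ := signVar (h.comp (-1 - Polynomial.X))
noncomputable def VI3 (h : Polynomial ℝ) : ℕ := signVar (T3 h.natDegree h)


lemma wronskian_rootMult (p q : Polynomial ℝ) (x : ℝ)
    (hW : p.derivative * q - p * q.derivative ≠ 0) :
    p.rootMultiplicity x - 1 ≤ (p.derivative * q - p * q.derivative).rootMultiplicity x := by
  rw [le_rootMultiplicity_iff hW]
  have hp' : (X - C x) ^ (p.rootMultiplicity x - 1) ∣ p.derivative :=
    (pow_dvd_pow _ (p.rootMultiplicity_sub_one_le_derivative_rootMultiplicity x)).trans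
      (pow_rootMultiplicity_dvd _ _)
  have hp : (X - C x) ^ (p.rootMultiplicity x - 1) ∣ p :=
    (pow_dvd_pow _ (Nat.sub_le _ _)).trans (pow_rootMultiplicity_dvd _ _)
  exact dvd_sub (hp'.mul_right q) (hp.mul_right _)

lemma count_le (p q : Polynomial ℝ)
    (hW : p.derivative * q - p * q.derivative ≠ 0)
    (P : ℝ → Prop) [DecidablePred P]
    (hconv : ∀ ⦃x z y : ℝ⦄, P x → P y → x ≤ z → z ≤ y → P z)
    (hq : ∀ x, P x → q.eval x ≠ 0) :
    (p.roots.filter P).card ≤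
      ((p.derivative * q - p * q.derivative).roots.filter P).card + 1 := by
  have hp : p ≠ 0 := by rintro rfl; simp at hW
  set W := p.derivative * q - p * q.derivative with hWdef
  set A : Finset ℝ := (p.roots.filter P).toFinset with hA
  set B : Finset ℝ := (W.roots.filter P).toFinset with hB
  have hmemA : ∀ x ∈ A, P x ∧ p.eval x = 0 := by
    intro x hx
    rw [hA, Multiset.mem_toFinset, Multiset.mem_filter, mem_roots hp] at hx
    exact ⟨hx.2, hx.1⟩
  -- interleaved
  have key : A.card ≤ (B \ A).card + 1 := by
    refine Finset.card_le_diff_of_interleaved fun x hx y hy hxy _ => ?_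
    obtain ⟨hPx, hpx⟩ := hmemA x hx
    obtain ⟨hPy, hpy⟩ := hmemA y hy
    have hPIcc : ∀ z ∈ Set.Icc x y, P z := fun z hz => hconv hPx hPy hz.1 hz.2
    have hcont : ContinuousOn (fun t => p.eval t / q.eval t) (Set.Icc x y) :=
      (p.continuousOn).div (q.continuousOn) fun z hz => hq z (hPIcc z hz)
    obtain ⟨z, hz, hz0⟩ := exists_deriv_eq_zero hxy hcont (by simp [hpx, hpy])
    have hPz : P z := hPIcc z ⟨hz.1.le, hz.2.le⟩
    have hqz : q.eval z ≠ 0 := hq z hPz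
    have hd : HasDerivAt (fun t => p.eval t / q.eval t)
        ((p.derivative.eval z * q.eval z - p.eval z * q.derivative.eval z) / (q.eval z) ^ 2) z :=
      (p.hasDerivAt z).div (q.hasDerivAt z) hqz
    have h0 : (p.derivative.eval z * q.eval z - p.eval z * q.derivative.eval z) / (q.eval z) ^ 2
        = 0 := by rw [← hd.deriv]; exact hz0
    have hnum : p.derivative.eval z * q.eval z - p.eval z * q.derivative.eval z = 0 := by
      rcases div_eq_zero_iff.mp h0 with h | h
      · exact h
      · exact absurd h (pow_ne_zero _ hqz)
    have hWz : W.eval z = 0 := by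
      rw [hWdef]; simpa using hnum
    rw [Set.mem_Ioo] at hz
    have hmemB : z ∈ B := by
      rw [hB, Multiset.mem_toFinset, Multiset.mem_filter, mem_roots hW]
      exact ⟨hWz, hPz⟩
    exact ⟨z, hmemB, hz⟩
  calc (p.roots.filter P).card
      = ∑ x ∈ A, (p.roots.filter P).count x := (Multiset.toFinset_sum_count_eq _).symm
    _ = ∑ x ∈ A, ((p.roots.filter P).count x - 1 + 1) :=
        (Finset.sum_congr rfl fun x hx => (tsub_add_cancel_of_le <| Nat.succ_le_iff.2 <|
          Multiset.count_pos.2 <| Multiset.mem_toFinset.1 hx).symm)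
    _ = (∑ x ∈ A, ((p.roots.filter P).count x - 1)) + A.card := by
        rw [Finset.sum_add_distrib, Finset.card_eq_sum_ones]
    _ ≤ (∑ x ∈ A, (W.roots.filter P).count x) + ((B \ A).card + 1) := by
        refine add_le_add (Finset.sum_le_sum fun x hx => ?_) key
        have hPx := (hmemA x hx).1
        rw [Multiset.count_filter_of_pos hPx, Multiset.count_filter_of_pos hPx,
          count_roots, count_roots]
        exact wronskian_rootMult p q x hW
    _ ≤ (∑ x ∈ A, (W.roots.filter P).count x) +
          ((∑ x ∈ B \ A, (W.roots.filter P).count x) + 1) := by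
        refine add_le_add_right (add_le_add_left ((Finset.card_eq_sum_ones _).trans_le ?_) _) _
        refine Finset.sum_le_sum fun x hx => Nat.succ_le_iff.2 ?_
        rw [Multiset.count_pos, ← Multiset.mem_toFinset, ← hB]
        exact (Finset.mem_sdiff.1 hx).1
    _ ≤ (W.roots.filter P).card + 1 := by
        rw [← add_assoc, ← Finset.sum_union Finset.disjoint_sdiff]
        refine add_le_add_left (le_of_eq ?_) _
        rw [Finset.union_sdiff_self_eq_union]
        rw [← Multiset.toFinset_sum_count_eq (W.roots.filter P)]
        refine (Finset.sum_subset (hB ▸ Finset.subset_union_right) ?_).symm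
        intro x _ hx₂
        rw [Multiset.count_eq_zero]
        intro hmem
        exact hx₂ (hB ▸ Multiset.mem_toFinset.2 hmem)

lemma dpow (u : Polynomial ℝ) (n : ℕ) :
    derivative (u ^ n) * u = C (n : ℝ) * u ^ n * derivative u := by
  induction n with
  | zero => simp
  | succ n ih =>
    rw [pow_succ, derivative_mul]
    push_cast
    rw [map_add, map_one]
    linear_combination u * ih

lemma key_id (m n : ℕ) :
    derivative ((X : Polynomial ℝ) ^ m * (X + 1) ^ n) * (X * (X + 1)) =
      X ^ m * (X + 1) ^ n * (C (m : ℝ) * (X + 1) + C (n : ℝ) * X) := by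
  rw [derivative_mul]
  have h1 := dpow (X : Polynomial ℝ) m
  have h2 := dpow ((X : Polynomial ℝ) + 1) n
  simp only [derivative_X, derivative_add, derivative_one, add_zero, mul_one] at h1 h2
  linear_combination ((X:Polynomial ℝ)+1)^n * ((X:Polynomial ℝ)+1) * h1 + (X:Polynomial ℝ)^m * X * h2

lemma Id1 (a b : ℝ) (k₂ k₃ l₁ l₂ : ℕ) :
    (X : Polynomial ℝ) * (X + 1) *
      (derivative (C a * (X+1)^l₁ + C b * (X^k₂ * (X+1)^l₂) + X^k₃) * (X^k₂ * (X+1)^l₂)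
        - (C a * (X+1)^l₁ + C b * (X^k₂ * (X+1)^l₂) + X^k₃) * derivative (X^k₂ * (X+1)^l₂)) =
    X^k₂ * (X+1)^l₂ *
      (C a * (X+1)^l₁ * ((C (l₁:ℝ) - C (l₂:ℝ) - C (k₂:ℝ)) * X - C (k₂:ℝ)) +
        X^k₃ * ((C (k₃:ℝ) - C (k₂:ℝ) - C (l₂:ℝ)) * X + (C (k₃:ℝ) - C (k₂:ℝ)))) := by
  have h1 := key_id 0 l₁
  have h2 := key_id k₂ l₂
  have h3 := key_id k₃ 0
  simp only [pow_zero, one_mul, mul_one, Nat.cast_zero, map_zero, zero_mul, add_zero,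
    zero_add] at h1 h3
  simp only [derivative_add, derivative_C_mul]
  linear_combination (C a * ((X:Polynomial ℝ)^k₂ * (X+1)^l₂)) * h1 +
    ((X:Polynomial ℝ)^k₂ * (X+1)^l₂) * h3 +
    (C b * ((X:Polynomial ℝ)^k₂ * (X+1)^l₂) -
      (C a * ((X:Polynomial ℝ)+1)^l₁ + C b * (X^k₂ * (X+1)^l₂) + X^k₃)) * h2

lemma Id2 (a α c κ δ : ℝ) (l₁ k₃ : ℕ) :
    (X : Polynomial ℝ) * (X + 1) *
      (derivative (C a * (X+1)^l₁ * (C α * X - C κ) + X^k₃ * (C c * X + C δ)) *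
          (X^k₃ * (C c * X + C δ))
        - (C a * (X+1)^l₁ * (C α * X - C κ) + X^k₃ * (C c * X + C δ)) *
          derivative (X^k₃ * (C c * X + C δ))) =
    C a * ((X+1)^l₁ * (X^k₃ *
      ((C α * X - C κ) * (C c * X + C δ) * (C (l₁:ℝ) * X - C (k₃:ℝ) * (X+1)) +
        C (α*δ + c*κ) * (X * (X+1))))) := by
  have hP := dpow ((X : Polynomial ℝ) + 1) l₁
  have hX := dpow (X : Polynomial ℝ) k₃
  simp only [derivative_add, derivative_one, add_zero, derivative_X, mul_one] at hP hX
  simp only [derivative_add, derivative_mul, derivative_C_mul, derivative_X, derivative_C,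
    derivative_sub, mul_one, mul_zero, sub_zero, add_zero, zero_add, map_add, map_mul]
  linear_combination (C a * X * (C α * X - C κ) * ((X:Polynomial ℝ)^k₃ * (C c * X + C δ))) * hP -
    (C a * ((X:Polynomial ℝ)+1) * (C c * X + C δ) * ((X:Polynomial ℝ)+1)^l₁ * (C α * X - C κ)) * hX

-- N(x) > 0 on (-1,0)
lemma NposIoo (α c κ δ K3 x : ℝ) (hα : 1 ≤ α) (hc : c ≤ 0) (hκ : 1 ≤ κ) (hδ : 0 ≤ δ)
    (hK3 : K3 = κ + δ) (hnd : 0 < δ ∨ c < 0) (hx1 : -1 < x) (hx0 : x < 0) :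
    0 < (α*x - κ) * (c*x + δ) * ((α - c)*x - K3) + (α*δ + c*κ) * (x*(x+1)) := by
  have hM : 0 < c*x + δ := by
    rcases hnd with h | h
    · nlinarith [mul_nonneg (neg_nonneg.2 hc) (neg_nonneg.2 hx0.le)]
    · nlinarith [mul_pos (neg_pos.2 h) (neg_pos.2 hx0)]
  have hL : α*x - κ < 0 := by nlinarith
  have hB : (α - c)*x - K3 < 0 := by nlinarith [mul_nonneg (neg_nonneg.2 hc) (neg_nonneg.2 hx0.le)]
  rcases le_or_gt (α*δ + c*κ) 0 with he | he
  · have t1 : 0 < (α*x - κ) * (c*x + δ) * ((α - c)*x - K3) := by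
      have := mul_pos_of_neg_of_neg hL hB
      nlinarith [mul_pos this hM]
    have hxx : x*(x+1) < 0 := mul_neg_of_neg_of_pos hx0 (by linarith)
    nlinarith [mul_nonneg (neg_nonneg.2 he) (neg_nonneg.2 hxx.le)]
  · have hd : 0 < δ := by nlinarith
    have hcx : 0 ≤ c*x := by nlinarith [mul_nonneg (neg_nonneg.2 hc) (neg_nonneg.2 hx0.le)]
    -- product lower bound: (κ-αx)*(cx+δ)*(K3-(α-c)x) ≥ (1-αx)*δ*1
    have q1 : δ * 1 ≤ (c*x + δ) * (K3 - (α - c)*x) := by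
      have h1 : δ ≤ c*x + δ := by linarith
      have h2 : (1:ℝ) ≤ K3 - (α - c)*x := by nlinarith
      exact mul_le_mul h1 h2 (by norm_num) hM.le
    have q2 : (1 - α*x) * (δ * 1) ≤ (κ - α*x) * ((c*x + δ) * (K3 - (α - c)*x)) := by
      have h1 : 1 - α*x ≤ κ - α*x := by linarith
      exact mul_le_mul h1 q1 (by positivity) (by linarith)
    -- second term bound: e*x*(x+1) ≥ α*δ*x
    have hxx : x*(x+1) < 0 := mul_neg_of_neg_of_pos hx0 (by linarith)
    have t2 : α*δ*x ≤ (α*δ + c*κ) * (x*(x+1)) := by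
      nlinarith [mul_nonneg (mul_nonneg (neg_nonneg.2 hc) (by linarith : (0:ℝ) ≤ κ)) (neg_nonneg.2 hxx.le),
        mul_nonneg (mul_nonneg (by linarith : (0:ℝ) ≤ α) hd.le) (sq_nonneg x)]
    nlinarith [q2, t2, hd]

-- N(x) > 0 on (-∞,-1)
lemma NposIio (α c κ δ K3 x : ℝ) (hα : 1 ≤ α) (hc : c ≤ 0) (hκ : 1 ≤ κ) (hδ : 0 ≤ δ)
    (hK3 : K3 = κ + δ) (hnd : 0 < δ ∨ c < 0) (hx : x < -1) :
    0 < (α*x - κ) * (c*x + δ) * ((α - c)*x - K3) + (α*δ + c*κ) * (x*(x+1)) := by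
  have hx0 : x < 0 := by linarith
  have hcx : 0 ≤ c*x + c := by nlinarith [mul_nonneg (neg_nonneg.2 hc) (by linarith : (0:ℝ) ≤ -x-1)]
  have hM : 0 < c*x + δ := by
    rcases hnd with h | h
    · nlinarith
    · nlinarith
  have hL : α*x - κ < 0 := by nlinarith
  have hB : (α - c)*x - K3 < 0 := by nlinarith
  have hxx : 0 < x*(x+1) := mul_pos_of_neg_of_neg hx0 (by linarith)
  rcases le_or_gt 0 (α*δ + c*κ) with he | he
  · have t1 : 0 < (α*x - κ) * (c*x + δ) * ((α - c)*x - K3) := by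
      have := mul_pos_of_neg_of_neg hL hB
      nlinarith [mul_pos this hM]
    nlinarith [mul_nonneg he hxx.le]
  · -- e < 0 case; then c < 0
    have hγ : 0 < -c := by nlinarith [mul_nonneg (by linarith : (0:ℝ) ≤ α) hδ]
    have hu : 1 < -x := by linarith
    have e2 : (-c)*(-x) ≤ c*x + δ := by nlinarith
    have L3b : κ + -x ≤ K3 - (α - c)*x := by nlinarith [mul_nonneg (neg_nonneg.2 hc) (by linarith : (0:ℝ) ≤ -x)]
    have L1b : κ + -x ≤ κ - α*x := by nlinarith
    have q1 : ((-c)*(-x)) * (κ + -x) ≤ (c*x + δ) * (K3 - (α - c)*x) := by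
      refine mul_le_mul e2 L3b (by linarith) hM.le
    have q2 : (κ + -x) * (((-c)*(-x)) * (κ + -x)) ≤ (κ - α*x) * ((c*x + δ) * (K3 - (α - c)*x)) := by
      refine mul_le_mul L1b q1 (by positivity) (by linarith)
    have t2 : c*κ * (x*(x+1)) ≤ (α*δ + c*κ) * (x*(x+1)) := by
      nlinarith [mul_nonneg (mul_nonneg (by linarith : (0:ℝ) ≤ α) hδ) hxx.le]
    have q3 : 0 < ((-c)*(-x)) * ((κ + -x)*(κ + -x) - κ*(-x - 1)) := by
      refine mul_pos (mul_pos hγ (by linarith)) (by nlinarith)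
    nlinarith [q2, t2, q3]

lemma Mpos (c δ x : ℝ) (hc : c ≤ 0) (hδ : 0 ≤ δ) (hnd : 0 < δ ∨ c < 0) (hx : x < 0) :
    0 < c*x + δ := by
  rcases hnd with h | h
  · nlinarith [mul_nonneg (neg_nonneg.2 hc) (neg_nonneg.2 hx.le)]
  · nlinarith [mul_pos (neg_pos.2 h) (neg_pos.2 hx)]

lemma hfz (P : ℝ → Prop) [DecidablePred P] (p : Polynomial ℝ)
    (h : ∀ x, P x → p.eval x ≠ 0) : p.roots.filter P = 0 := by
  rw [Multiset.filter_eq_nil]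
  intro x hx hPx
  exact h x hPx ((mem_roots'.1 hx).2)

lemma cardmul (P : ℝ → Prop) [DecidablePred P] (p q : Polynomial ℝ) (hp : p ≠ 0) (hq : q ≠ 0) :
    (((p*q).roots.filter P)).card = ((p.roots.filter P)).card + ((q.roots.filter P)).card := by
  rw [roots_mul (mul_ne_zero hp hq), Multiset.filter_add, Multiset.card_add]

lemma aux_count (a b αr cr κr δr : ℝ) (ha : a ≠ 0) (k₂ k₃ l₁ l₂ : ℕ)
    (hk₂ : 0 < k₂) (hk₃ : 0 < k₃) (hl₁ : k₂ + l₂ < l₁) (hl₁' : k₃ < l₁)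
    (hmid1 : k₂ ≤ k₃) (hmid2 : k₃ ≤ k₂ + l₂)
    (hαr : αr = (l₁:ℝ)-(l₂:ℝ)-(k₂:ℝ)) (hcr : cr = (k₃:ℝ)-(k₂:ℝ)-(l₂:ℝ))
    (hκr : κr = (k₂:ℝ)) (hδr : δr = (k₃:ℝ)-(k₂:ℝ))
    (P : ℝ → Prop) [DecidablePred P]
    (hconv : ∀ ⦃x z y : ℝ⦄, P x → P y → x ≤ z → z ≤ y → P z)
    (hxP : ∀ x, P x → x < 0 ∧ x ≠ -1)
    (hN : ∀ x, P x → ¬(k₃ = k₂ ∧ l₂ = 0) →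
      0 < (αr*x - κr) * (cr*x + δr) * ((l₁:ℝ)*x - (k₃:ℝ)*(x+1)) + (αr*δr + cr*κr) * (x*(x+1))) :
    (((C a * (X+1)^l₁ + C b * (X^k₂ * (X+1)^l₂) + X^k₃ : Polynomial ℝ)).roots.filter P).card ≤ 2 := by
  have hαr1 : 1 ≤ αr := by
    rw [hαr]
    have h : (k₂:ℝ) + l₂ + 1 ≤ l₁ := by exact_mod_cast hl₁
    linarith
  have hcr0 : cr ≤ 0 := by
    rw [hcr]
    have h : (k₃:ℝ) ≤ k₂ + l₂ := by exact_mod_cast hmid2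
    linarith
  have hκr1 : 1 ≤ κr := by
    rw [hκr]; exact_mod_cast hk₂
  have hδr0 : 0 ≤ δr := by
    rw [hδr]
    have h : (k₂:ℝ) ≤ k₃ := by exact_mod_cast hmid1
    linarith
  set L : Polynomial ℝ := C αr * X - C κr with hL
  set M : Polynomial ℝ := C cr * X + C δr with hM
  set g : Polynomial ℝ := C a * (X+1)^l₁ + C b * (X^k₂ * (X+1)^l₂) + X^k₃ with hg
  set Q : Polynomial ℝ := X^k₂ * (X+1)^l₂ with hQ
  set W2 : Polynomial ℝ := C a * (X+1)^l₁ * L + X^k₃ * M with hW2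
  have hX1ne : ((X:Polynomial ℝ) + 1) ≠ 0 := fun h => by
    have := congrArg (eval 0) h; simp at this
  have hLeval : ∀ x : ℝ, L.eval x = αr*x - κr := by intro x; rw [hL]; simp
  have hMeval : ∀ x : ℝ, M.eval x = cr*x + δr := by intro x; rw [hM]; simp
  have hLne : ∀ x : ℝ, x < 0 → L.eval x ≠ 0 := by
    intro x h0
    rw [hLeval]
    nlinarith [mul_nonneg (by linarith : (0:ℝ) ≤ αr) (by linarith : (0:ℝ) ≤ -x)]
  have hQevals : ∀ x, P x → Q.eval x ≠ 0 := by
    intro x hPx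
    obtain ⟨h0, h1⟩ := hxP x hPx
    have hx1 : x + 1 ≠ 0 := fun h => h1 (by linarith)
    rw [hQ]
    simp only [eval_mul, eval_pow, eval_X, eval_add, eval_one]
    exact mul_ne_zero (pow_ne_zero _ h0.ne) (pow_ne_zero _ hx1)
  have hXX1evals : ∀ x, P x → ((X:Polynomial ℝ) * (X+1)).eval x ≠ 0 := by
    intro x hPx
    obtain ⟨h0, h1⟩ := hxP x hPx
    have hx1 : x + 1 ≠ 0 := fun h => h1 (by linarith)
    simp only [eval_mul, eval_X, eval_add, eval_one]
    exact mul_ne_zero h0.ne hx1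
  have hW2ne : W2 ≠ 0 := by
    intro h
    have h0 : W2.eval 0 = -(a * κr) := by
      rw [hW2, hL, hM]
      simp [zero_pow hk₃.ne']
    rw [h, eval_zero] at h0
    have h2 : a * κr = 0 := by linarith
    rcases mul_eq_zero.1 h2 with h3 | h3
    · exact ha h3
    · linarith
  have id1 : (X : Polynomial ℝ) * (X + 1) * (derivative g * Q - g * derivative Q)
      = Q * W2 := by
    rw [hg, hQ, hW2, hL, hM, hαr, hcr, hκr, hδr]
    simp only [map_sub]
    exact Id1 a b k₂ k₃ l₁ l₂
  have hW1ne : derivative g * Q - g * derivative Q ≠ 0 := by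
    intro h
    rw [h, mul_zero] at id1
    exact (mul_ne_zero (by rw [hQ]; exact mul_ne_zero (pow_ne_zero _ X_ne_zero) (pow_ne_zero _ hX1ne)) hW2ne) id1.symm
  have step1 := count_le g Q hW1ne P hconv hQevals
  have e1 : (((derivative g * Q - g * derivative Q).roots.filter P)).card
      = ((W2.roots.filter P)).card := by
    have c1 := cardmul P ((X:Polynomial ℝ) * (X+1)) (derivative g * Q - g * derivative Q)
      (mul_ne_zero X_ne_zero hX1ne) hW1ne
    have c2 := cardmul P Q W2 (by rw [hQ]; exact mul_ne_zero (pow_ne_zero _ X_ne_zero) (pow_ne_zero _ hX1ne)) hW2ne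
    rw [hfz P _ hXX1evals] at c1
    rw [hfz P _ hQevals] at c2
    simp at c1 c2
    rw [← c1, ← c2, id1]
  by_cases hdeg : k₃ = k₂ ∧ l₂ = 0
  · have hcr' : cr = 0 := by rw [hcr, hdeg.1, hdeg.2]; push_cast; ring
    have hδr' : δr = 0 := by rw [hδr, hdeg.1]; ring
    have hM0 : M = 0 := by rw [hM, hcr', hδr']; simp
    have e2 : ((W2.roots.filter P)).card = 0 := by
      have hW2' : W2 = C a * (X+1)^l₁ * L := by rw [hW2, hM0]; ring
      rw [hW2']
      have hz := hfz P (C a * (X+1)^l₁ * L) ?_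
      · rw [hz]; rfl
      intro x hPx
      obtain ⟨h0, h1⟩ := hxP x hPx
      have hx1 : x + 1 ≠ 0 := fun h => h1 (by linarith)
      simp only [eval_mul, eval_pow, eval_C, eval_add, eval_X, eval_one]
      exact mul_ne_zero (mul_ne_zero ha (pow_ne_zero _ hx1)) (hLne x h0)
    omega
  · have hnd : 0 < δr ∨ cr < 0 := by
      rcases Nat.lt_or_ge k₂ k₃ with h | h
      · left
        rw [hδr]
        have : (k₂:ℝ) < k₃ := by exact_mod_cast h
        linarith
      · right
        have hk : k₃ = k₂ := le_antisymm h hmid1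
        have hl : 0 < l₂ := by
          rcases Nat.eq_zero_or_pos l₂ with h' | h'
          · exact absurd ⟨hk, h'⟩ hdeg
          · exact h'
        rw [hcr, hk]
        have : (0:ℝ) < l₂ := by exact_mod_cast hl
        linarith
    set P5 : Polynomial ℝ := X^k₃ * M with hP5
    have hP5evals : ∀ x, P x → P5.eval x ≠ 0 := by
      intro x hPx
      obtain ⟨h0, h1⟩ := hxP x hPx
      have hMx : 0 < M.eval x := by
        rw [hMeval]
        exact Mpos cr δr x hcr0 hδr0 hnd h0
      rw [hP5]
      simp only [eval_mul, eval_pow, eval_X]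
      exact mul_ne_zero (pow_ne_zero _ h0.ne) hMx.ne'
    set N : Polynomial ℝ := L * M * (C (l₁:ℝ) * X - C (k₃:ℝ) * (X+1)) + C (αr*δr + cr*κr) * (X * (X+1)) with hNdef
    have id2 : (X : Polynomial ℝ) * (X + 1) * (derivative W2 * P5 - W2 * derivative P5)
        = C a * ((X+1)^l₁ * (X^k₃ * N)) := by
      rw [hW2, hP5, hL, hM, hNdef]
      exact Id2 a αr cr κr δr l₁ k₃
    have hNevalform : ∀ x : ℝ, N.eval x =
        (αr*x - κr) * (cr*x + δr) * ((l₁:ℝ)*x - (k₃:ℝ)*(x+1)) + (αr*δr + cr*κr) * (x*(x+1)) := by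
      intro x
      rw [hNdef, hL, hM]
      simp only [eval_add, eval_mul, eval_sub, eval_C, eval_X, eval_one]
      all_goals ring
    have hl₁pos : (0:ℝ) < (l₁:ℝ) := by exact_mod_cast (show 0 < l₁ by omega)
    have hNne : N ≠ 0 := by
      intro h
      rcases hnd with h' | h'
      · have h0 : N.eval 0 = κr * δr * (k₃:ℝ) := by rw [hNevalform]; ring
        rw [h, eval_zero] at h0
        have hk₃pos : (0:ℝ) < (k₃:ℝ) := by exact_mod_cast hk₃
        nlinarith [mul_pos (mul_pos (show (0:ℝ) < κr by linarith) h') hk₃pos]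
      · have h0 : N.eval (-1) = (αr + κr) * (δr - cr) * (l₁:ℝ) := by rw [hNevalform]; ring
        rw [h, eval_zero] at h0
        nlinarith [mul_pos (mul_pos (show (0:ℝ) < αr + κr by linarith)
          (show (0:ℝ) < δr - cr by linarith)) hl₁pos]
    have hW3ne : derivative W2 * P5 - W2 * derivative P5 ≠ 0 := by
      intro h
      rw [h, mul_zero] at id2
      exact (mul_ne_zero (fun hC => ha (by simpa using congrArg (eval 0) hC))
        (mul_ne_zero (pow_ne_zero _ hX1ne) (mul_ne_zero (pow_ne_zero _ X_ne_zero) hNne))) id2.symm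
    have step2 := count_le W2 P5 hW3ne P hconv hP5evals
    have e3 : (((derivative W2 * P5 - W2 * derivative P5).roots.filter P)).card = 0 := by
      have c1 := cardmul P ((X:Polynomial ℝ) * (X+1)) (derivative W2 * P5 - W2 * derivative P5)
        (mul_ne_zero X_ne_zero hX1ne) hW3ne
      rw [hfz P _ hXX1evals] at c1
      simp at c1
      rw [← c1, id2]
      have hev : ∀ x, P x → (C a * ((X+1)^l₁ * ((X:Polynomial ℝ)^k₃ * N))).eval x ≠ 0 := by
        intro x hPx
        obtain ⟨h0, h1⟩ := hxP x hPx
        have hx1 : x + 1 ≠ 0 := fun h => h1 (by linarith)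
        have hNx : 0 < N.eval x := by
          rw [hNevalform]
          exact hN x hPx hdeg
        simp only [eval_mul, eval_pow, eval_C, eval_add, eval_X, eval_one]
        exact mul_ne_zero ha (mul_ne_zero (pow_ne_zero _ hx1)
          (mul_ne_zero (pow_ne_zero _ h0.ne) hNx.ne'))
      rw [hfz P _ hev]
      rfl
    rw [e3] at step2
    rw [e1] at step1
    omega


theorem stmt15 (a b : ℝ) (ha : a ≠ 0) (hb : b ≠ 0) (k₂ k₃ l₁ l₂ : ℕ)
    (hk₂ : 0 < k₂) (hk₃ : 0 < k₃) (hl₁ : k₂ + l₂ < l₁) (hl₁' : k₃ < l₁)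
    (hmid : k₂ ≤ k₃ ∧ k₃ ≤ k₂ + l₂)
    (g : Polynomial ℝ)
    (hgdef : g = Polynomial.C a * (Polynomial.X + 1) ^ l₁ +
        Polynomial.C b * Polynomial.X ^ k₂ * (Polynomial.X + 1) ^ l₂ +
        Polynomial.X ^ k₃) :
    (g.roots.filter fun x => x < -1).card ≤ 2 ∧
      (g.roots.filter fun x => -1 < x ∧ x < 0).card ≤ 2 := by
  obtain ⟨hmid1, hmid2⟩ := hmid
  have hg' : g = C a * (X+1)^l₁ + C b * (X^k₂ * (X+1)^l₂) + X^k₃ := by rw [hgdef]; ring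
  have hα1 : 1 ≤ (l₁:ℝ)-(l₂:ℝ)-(k₂:ℝ) := by
    have h : (k₂:ℝ) + l₂ + 1 ≤ l₁ := by exact_mod_cast hl₁
    linarith
  have hc0 : (k₃:ℝ)-(k₂:ℝ)-(l₂:ℝ) ≤ 0 := by
    have h : (k₃:ℝ) ≤ k₂ + l₂ := by exact_mod_cast hmid2
    linarith
  have hκ1 : 1 ≤ (k₂:ℝ) := by exact_mod_cast hk₂
  have hδ0 : 0 ≤ (k₃:ℝ)-(k₂:ℝ) := by
    have h : (k₂:ℝ) ≤ k₃ := by exact_mod_cast hmid1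
    linarith
  have hK3 : (k₃:ℝ) = (k₂:ℝ) + ((k₃:ℝ)-(k₂:ℝ)) := by ring
  have hndfun : ¬(k₃ = k₂ ∧ l₂ = 0) →
      (0 < (k₃:ℝ)-(k₂:ℝ) ∨ (k₃:ℝ)-(k₂:ℝ)-(l₂:ℝ) < 0) := by
    intro hdeg
    rcases Nat.lt_or_ge k₂ k₃ with h | h
    · left
      have : (k₂:ℝ) < k₃ := by exact_mod_cast h
      linarith
    · right
      have hk : k₃ = k₂ := le_antisymm h hmid1
      have hl : 0 < l₂ := by
        rcases Nat.eq_zero_or_pos l₂ with h' | h'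
        · exact absurd ⟨hk, h'⟩ hdeg
        · exact h'
      have h1 : (0:ℝ) < l₂ := by exact_mod_cast hl
      have h2 : (k₃:ℝ) = k₂ := by exact_mod_cast hk
      linarith
  constructor
  · rw [hg']
    refine aux_count a b _ _ _ _ ha k₂ k₃ l₁ l₂ hk₂ hk₃ hl₁ hl₁' hmid1 hmid2
      rfl rfl rfl rfl _ ?_ ?_ ?_
    · intro x z y hx hy hxz hzy
      exact lt_of_le_of_lt hzy hy
    · intro x hx
      exact ⟨by linarith, fun h => by rw [h] at hx; linarith⟩
    · intro x hPx hdeg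
      have h := NposIio ((l₁:ℝ)-(l₂:ℝ)-(k₂:ℝ)) ((k₃:ℝ)-(k₂:ℝ)-(l₂:ℝ)) (k₂:ℝ) ((k₃:ℝ)-(k₂:ℝ))
        (k₃:ℝ) x hα1 hc0 hκ1 hδ0 hK3 (hndfun hdeg) hPx
      have e : (((l₁:ℝ)-(l₂:ℝ)-(k₂:ℝ))*x - (k₂:ℝ)) * (((k₃:ℝ)-(k₂:ℝ)-(l₂:ℝ))*x + ((k₃:ℝ)-(k₂:ℝ)))
            * ((l₁:ℝ)*x - (k₃:ℝ)*(x+1)) +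
          ((((l₁:ℝ)-(l₂:ℝ)-(k₂:ℝ)))*((k₃:ℝ)-(k₂:ℝ)) + ((k₃:ℝ)-(k₂:ℝ)-(l₂:ℝ))*(k₂:ℝ)) * (x*(x+1))
          = (((l₁:ℝ)-(l₂:ℝ)-(k₂:ℝ))*x - (k₂:ℝ)) * (((k₃:ℝ)-(k₂:ℝ)-(l₂:ℝ))*x + ((k₃:ℝ)-(k₂:ℝ)))
            * (((((l₁:ℝ)-(l₂:ℝ)-(k₂:ℝ)) - ((k₃:ℝ)-(k₂:ℝ)-(l₂:ℝ))))*x - (k₃:ℝ)) +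
          ((((l₁:ℝ)-(l₂:ℝ)-(k₂:ℝ)))*((k₃:ℝ)-(k₂:ℝ)) + ((k₃:ℝ)-(k₂:ℝ)-(l₂:ℝ))*(k₂:ℝ)) * (x*(x+1)) := by
        ring
      rw [e]
      exact h
  · rw [hg']
    refine aux_count a b _ _ _ _ ha k₂ k₃ l₁ l₂ hk₂ hk₃ hl₁ hl₁' hmid1 hmid2
      rfl rfl rfl rfl _ ?_ ?_ ?_
    · intro x z y hx hy hxz hzy
      exact ⟨lt_of_lt_of_le hx.1 hxz, lt_of_le_of_lt hzy hy.2⟩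
    · intro x hx
      exact ⟨hx.2, fun h => by rw [h] at hx; linarith [hx.1]⟩
    · intro x hPx hdeg
      have h := NposIoo ((l₁:ℝ)-(l₂:ℝ)-(k₂:ℝ)) ((k₃:ℝ)-(k₂:ℝ)-(l₂:ℝ)) (k₂:ℝ) ((k₃:ℝ)-(k₂:ℝ))
        (k₃:ℝ) x hα1 hc0 hκ1 hδ0 hK3 (hndfun hdeg) hPx.1 hPx.2
      have e : (((l₁:ℝ)-(l₂:ℝ)-(k₂:ℝ))*x - (k₂:ℝ)) * (((k₃:ℝ)-(k₂:ℝ)-(l₂:ℝ))*x + ((k₃:ℝ)-(k₂:ℝ)))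
            * ((l₁:ℝ)*x - (k₃:ℝ)*(x+1)) +
          ((((l₁:ℝ)-(l₂:ℝ)-(k₂:ℝ)))*((k₃:ℝ)-(k₂:ℝ)) + ((k₃:ℝ)-(k₂:ℝ)-(l₂:ℝ))*(k₂:ℝ)) * (x*(x+1))
          = (((l₁:ℝ)-(l₂:ℝ)-(k₂:ℝ))*x - (k₂:ℝ)) * (((k₃:ℝ)-(k₂:ℝ)-(l₂:ℝ))*x + ((k₃:ℝ)-(k₂:ℝ)))
            * (((((l₁:ℝ)-(l₂:ℝ)-(k₂:ℝ)) - ((k₃:ℝ)-(k₂:ℝ)-(l₂:ℝ))))*x - (k₃:ℝ)) +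
          ((((l₁:ℝ)-(l₂:ℝ)-(k₂:ℝ)))*((k₃:ℝ)-(k₂:ℝ)) + ((k₃:ℝ)-(k₂:ℝ)-(l₂:ℝ))*(k₂:ℝ)) * (x*(x+1)) := by
        ring
      rw [e]
      exact h
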